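/- With notation as in the context: let Φ be another system of the same degree d and let g ∈ GL_{N+1}(L) satisfy φ ≈ Φ^g. Let σ ∈ G and let A, F ∈ GL_{N+1}(L) satisfy φ^σ ≈ φ^A and Φ^σ ≈ Φ^F. Then φ^{(g⁻¹ · F · σ(g)) · A⁻¹} ≈ φ. (That is, the cocycles arising from two representatives of the same conjugacy class are cohomologous relative to the stabilizer 𝒜_φ.) -/

import Mathlib

/-- The conjugate system `φ^A`: its `i`-th entry is
`∑ⱼ (A⁻¹)ᵢⱼ · φⱼ(A·X)`, where `φⱼ(A·X)` substitutes `Xₖ ↦ ∑ₗ Aₖₗ·Xₗ`. -/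
noncomputable def conjSys {L : Type*} [Field L] {n : ℕ}
    (A : Matrix.GeneralLinearGroup (Fin n) L)
    (φ : Fin n → MvPolynomial (Fin n) L) : Fin n → MvPolynomial (Fin n) L :=
  fun i => ∑ j, MvPolynomial.C ((↑(A⁻¹) : Matrix (Fin n) (Fin n) L) i j) *
    MvPolynomial.aeval
      (fun k => ∑ l, MvPolynomial.C ((↑A : Matrix (Fin n) (Fin n) L) k l) * MvPolynomial.X l)
      (φ j)

/-- Projective equality of systems: `ψ = c·φ` for some nonzero scalar `c`. -/
def projEq {L : Type*} [Field L] {n : ℕ}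
    (φ ψ : Fin n → MvPolynomial (Fin n) L) : Prop :=
  ∃ c : L, c ≠ 0 ∧ ∀ i, ψ i = MvPolynomial.C c * φ i

/-- The system `φ^σ` obtained by applying `σ` to every coefficient. -/
noncomputable def mapSys {L : Type*} [Field L] {n : ℕ} (σ : L →+* L)
    (φ : Fin n → MvPolynomial (Fin n) L) : Fin n → MvPolynomial (Fin n) L :=
  fun i => MvPolynomial.map σ (φ i)

/-- The matrix `σ(A)` obtained by applying `σ` to every entry of `A`. -/
noncomputable def galGL {L : Type*} [Field L] {n : ℕ} (σ : L →+* L)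
    (A : Matrix.GeneralLinearGroup (Fin n) L) : Matrix.GeneralLinearGroup (Fin n) L :=
  Units.map σ.mapMatrix.toMonoidHom A

open MvPolynomial

section aux
variable {L : Type*} [Field L] {n : ℕ}


lemma aeval_lin_comp (A B : Matrix (Fin n) (Fin n) L) (p : MvPolynomial (Fin n) L) :
    aeval (fun k => ∑ l, C (B k l) * X l)
      (aeval (fun k => ∑ l, C (A k l) * X l) p)
      = aeval (fun k => ∑ l, C ((A * B) k l) * X l) p := by
  rw [comp_aeval_apply]
  have hfun : (fun i => aeval (fun k => ∑ l, C (B k l) * X l) (∑ l, C (A i l) * X l))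
      = fun k => ∑ l, C ((A * B) k l) * X l := by
    funext k
    simp only [map_sum, map_mul, aeval_C, aeval_X, Finset.mul_sum, Matrix.mul_apply,
      Finset.sum_mul, algebraMap_eq, map_sum, C_mul]
    rw [Finset.sum_comm]
    congr 1; funext l; congr 1; funext m
    ring
  rw [hfun]

lemma conjSys_mul (A B : Matrix.GeneralLinearGroup (Fin n) L)
    (φ : Fin n → MvPolynomial (Fin n) L) :
    conjSys (A * B) φ = conjSys B (conjSys A φ) := by
  funext i
  have hval : (↑(A * B) : Matrix (Fin n) (Fin n) L)
      = (↑A : Matrix (Fin n) (Fin n) L) * (↑B : Matrix (Fin n) (Fin n) L) := Units.val_mul _ _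
  have hinv : (↑((A * B)⁻¹) : Matrix (Fin n) (Fin n) L)
      = (↑(B⁻¹) : Matrix (Fin n) (Fin n) L) * (↑(A⁻¹) : Matrix (Fin n) (Fin n) L) := by
    simp [mul_inv_rev]
  simp only [conjSys, map_sum, map_mul, aeval_C, algebraMap_eq, Finset.mul_sum,
    aeval_lin_comp, hinv, hval, Matrix.mul_apply, Finset.sum_mul, map_sum]
  rw [Finset.sum_comm]
  congr 1; funext j; congr 1; funext k
  ring

lemma conjSys_one (φ : Fin n → MvPolynomial (Fin n) L) : conjSys 1 φ = φ := by
  funext i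
  have hlin : (fun k => ∑ l, C (((↑(1 : Matrix.GeneralLinearGroup (Fin n) L)) : Matrix (Fin n) (Fin n) L) k l) * X l)
      = (X : Fin n → MvPolynomial (Fin n) L) := by
    funext k
    rw [Finset.sum_eq_single k]
    · simp [Matrix.one_apply]
    · intro b _ hb; simp [Units.val_one, Matrix.one_apply, Ne.symm hb]
    · simp
  simp only [conjSys, hlin, aeval_X_left_apply, inv_one, Units.val_one]
  rw [Finset.sum_eq_single i]
  · simp [Matrix.one_apply]
  · intro b _ hb; simp [Matrix.one_apply, Ne.symm hb]
  · simp

lemma mapSys_conjSys (σ : L →+* L) (A : Matrix.GeneralLinearGroup (Fin n) L)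
    (φ : Fin n → MvPolynomial (Fin n) L) :
    mapSys σ (conjSys A φ) = conjSys (galGL σ A) (mapSys σ φ) := by
  funext i
  simp only [mapSys]
  have hinv : (↑((galGL σ A)⁻¹) : Matrix (Fin n) (Fin n) L)
      = fun k l => σ ((↑(A⁻¹) : Matrix (Fin n) (Fin n) L) k l) := by
    have : (galGL σ A)⁻¹ = galGL σ A⁻¹ :=
      show (Units.map σ.mapMatrix.toMonoidHom A)⁻¹ = Units.map σ.mapMatrix.toMonoidHom A⁻¹ from
      (map_inv (Units.map (σ.mapMatrix : Matrix (Fin n) (Fin n) L →+* Matrix (Fin n) (Fin n) L).toMonoidHom)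
        (A : (Matrix (Fin n) (Fin n) L)ˣ)).symm
    rw [this]; rfl
  have hA : (↑(galGL σ A) : Matrix (Fin n) (Fin n) L)
      = fun k l => σ ((↑A : Matrix (Fin n) (Fin n) L) k l) := rfl
  simp only [conjSys, map_sum, map_mul, map_C, hinv]
  congr 1; funext j
  congr 1
  simp only [mapSys]
  rw [map_aeval, coe_eval₂Hom, aeval_def, algebraMap_eq, eval₂_map]
  congr 1
  · ext x; simp [algebraMap_eq]
  · funext k; simp [hA]

lemma projEq_refl (φ : Fin n → MvPolynomial (Fin n) L) : projEq φ φ :=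
  ⟨1, one_ne_zero, fun i => by simp⟩

lemma projEq_symm {φ ψ : Fin n → MvPolynomial (Fin n) L} (h : projEq φ ψ) : projEq ψ φ := by
  obtain ⟨c, hc, h⟩ := h
  exact ⟨c⁻¹, inv_ne_zero hc, fun i => by
    rw [h i, ← mul_assoc, ← C_mul, inv_mul_cancel₀ hc, C_1, one_mul]⟩

lemma projEq_trans {φ ψ χ : Fin n → MvPolynomial (Fin n) L}
    (h1 : projEq φ ψ) (h2 : projEq ψ χ) : projEq φ χ := by
  obtain ⟨c, hc, h1⟩ := h1
  obtain ⟨e, he, h2⟩ := h2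
  exact ⟨e * c, mul_ne_zero he hc, fun i => by rw [h2 i, h1 i, ← mul_assoc, ← C_mul]⟩

lemma projEq_conjSys (A : Matrix.GeneralLinearGroup (Fin n) L)
    {φ ψ : Fin n → MvPolynomial (Fin n) L} (h : projEq φ ψ) :
    projEq (conjSys A φ) (conjSys A ψ) := by
  obtain ⟨c, hc, h⟩ := h
  refine ⟨c, hc, fun i => ?_⟩
  simp only [conjSys, Finset.mul_sum]
  congr 1; funext j
  rw [h j]
  simp only [map_mul, aeval_C, algebraMap_eq]
  ring

lemma projEq_mapSys (σ : L →+* L)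
    {φ ψ : Fin n → MvPolynomial (Fin n) L} (h : projEq φ ψ) :
    projEq (mapSys σ φ) (mapSys σ ψ) := by
  obtain ⟨c, hc, h⟩ := h
  refine ⟨σ c, fun h0 => hc (σ.injective (by simpa using h0)), fun i => ?_⟩
  simp only [mapSys, h i, map_mul, map_C]

end aux

theorem cocycles_cohomologous_relative_to_stabilizer
    {K L : Type*} [Field K] [Field L] [Algebra K L] [IsSepClosure K L]
    (N d : ℕ) (hN : 1 ≤ N) (hd : 1 ≤ d)
    (φ Φ : Fin (N + 1) → MvPolynomial (Fin (N + 1)) L)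
    (hhomφ : ∀ i, (φ i).IsHomogeneous d) (hneφ : ∃ i, φ i ≠ 0)
    (hhomΦ : ∀ i, (Φ i).IsHomogeneous d) (hneΦ : ∃ i, Φ i ≠ 0)
    (g : Matrix.GeneralLinearGroup (Fin (N + 1)) L)
    (hg : projEq (conjSys g Φ) φ)
    (σ : L ≃ₐ[K] L)
    (A F : Matrix.GeneralLinearGroup (Fin (N + 1)) L)
    (hA : projEq (conjSys A φ) (mapSys (σ : L →+* L) φ))
    (hF : projEq (conjSys F Φ) (mapSys (σ : L →+* L) Φ)) :
    projEq (conjSys ((g⁻¹ * F * galGL (σ : L →+* L) g) * A⁻¹) φ) φ := by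
  set τ := (σ : L →+* L)
  -- Φ ≈ conjSys g⁻¹ φ
  have h1 : projEq Φ (conjSys g⁻¹ φ) := by
    have := projEq_conjSys g⁻¹ hg
    rw [← conjSys_mul, mul_inv_cancel, conjSys_one] at this
    exact this
  -- conjSys (g⁻¹ * F) φ = conjSys F (conjSys g⁻¹ φ) ≈ mapSys τ Φ ≈ mapSys τ (conjSys g⁻¹ φ)
  have h2 : projEq (conjSys (g⁻¹ * F) φ) (conjSys (galGL τ g⁻¹) (mapSys τ φ)) := by
    rw [conjSys_mul]
    refine projEq_trans (projEq_conjSys F (projEq_symm h1)) ?_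
    refine projEq_trans hF ?_
    have := projEq_mapSys τ h1
    rw [mapSys_conjSys] at this
    exact this
  -- multiply by galGL τ g
  have h3 : projEq (conjSys (g⁻¹ * F * galGL τ g) φ) (mapSys τ φ) := by
    have := projEq_conjSys (galGL τ g) h2
    rw [← conjSys_mul, ← conjSys_mul] at this
    have hgg : galGL τ g⁻¹ * galGL τ g = 1 := by
      show Units.map _ g⁻¹ * Units.map _ g = 1
      rw [← map_mul, inv_mul_cancel, map_one]
    rw [hgg, conjSys_one] at this
    exact this
  -- compare with hA and cancel A
  have h4 : projEq (conjSys (g⁻¹ * F * galGL τ g) φ) (conjSys A φ) :=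
    projEq_trans h3 (projEq_symm hA)
  have := projEq_conjSys A⁻¹ h4
  rw [← conjSys_mul, ← conjSys_mul, mul_inv_cancel, conjSys_one] at this
  exact this
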